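/- In PG(2,q) with q ≡ 3 (mod 4), q ≥ 7, let b be a non-square in GF(q) with b − 1 also a non-square. Then S = C_1 ∪ C_b ∪ {(0:0:1)} is an untouchable set of size 2q + 1, where C_k = V(xy + kz²). -/

import Mathlib

/-- The point type of `PG(2,q)` over the field `F`: the projectivization of `F³`.
We also use this type for lines, via line coordinates. -/
abbrev PG2 (F : Type) [Field F] : Type := Projectivization F (Fin 3 → F)

/-- A point of `PG(2,q)` with homogeneous coordinates `(x : y : z)`. -/
noncomputable def pt {F : Type} [Field F] (x y z : F) (h : ![x, y, z] ≠ 0) : PG2 F :=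
  Projectivization.mk F ![x, y, z] h

lemma vec_ne_zero {F : Type} [Field F] {x y z : F} (i : Fin 3) (h : ![x, y, z] i ≠ 0) :
    ![x, y, z] ≠ 0 := fun hz => h (by simp [hz])

/-- Incidence between a line `l` (in line coordinates) and a point `P`. This is well defined:
the pairing is bilinear, so its vanishing is independent of the choice of representatives. -/
def inc {F : Type} [Field F] (l P : PG2 F) : Prop :=
  l.rep 0 * P.rep 0 + l.rep 1 * P.rep 1 + l.rep 2 * P.rep 2 = 0

/-- A set of points is untouchable if no line meets it in exactly one point. -/
def Untouchable {F : Type} [Field F] (S : Set (PG2 F)) : Prop :=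
  ∀ l : PG2 F, {P ∈ S | inc l P}.ncard ≠ 1

/-- A line `l` is tangent to a point set `S` if it meets `S` in exactly one point. -/
def IsTangent {F : Type} [Field F] (l : PG2 F) (S : Set (PG2 F)) : Prop :=
  {P ∈ S | inc l P}.ncard = 1

/-- A nondegenerate conic in `PG(2,q)` is, combinatorially, an oval: a set of `q + 1` points
met by every line in at most `2` points. -/
def IsOval {F : Type} [Field F] (q : ℕ) (S : Set (PG2 F)) : Prop :=
  S.ncard = q + 1 ∧ ∀ l : PG2 F, {P ∈ S | inc l P}.ncard ≤ 2

/-- The conic `C_k = V(xy + kz²)`. -/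
def Ck {F : Type} [Field F] (k : F) : Set (PG2 F) :=
  {P | P.rep 0 * P.rep 1 + k * P.rep 2 ^ 2 = 0}

variable {F : Type} [Field F]

set_option linter.unusedSectionVars false

lemma eta3 (v : Fin 3 → F) : ![v 0, v 1, v 2] = v := by
  funext i; fin_cases i <;> simp

lemma pt_eq_pt_iff {x y z x' y' z' : F} (h : ![x,y,z] ≠ 0) (h' : ![x',y',z'] ≠ 0) :
    pt x y z h = pt x' y' z' h' ↔ ∃ c : F, c ≠ 0 ∧ x = c * x' ∧ y = c * y' ∧ z = c * z' := by
  unfold pt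
  rw [Projectivization.mk_eq_mk_iff]
  constructor
  · rintro ⟨a, ha⟩
    refine ⟨a, a.ne_zero, ?_, ?_, ?_⟩
    · simpa [Units.smul_def] using (congrFun ha 0).symm
    · simpa [Units.smul_def] using (congrFun ha 1).symm
    · simpa [Units.smul_def] using (congrFun ha 2).symm
  · rintro ⟨c, hc, h1, h2, h3⟩
    refine ⟨Units.mk0 c hc, ?_⟩
    funext i; fin_cases i <;> simp [Units.smul_def, h1, h2, h3]

lemma exists_rep_pt {x y z : F} (h : ![x,y,z] ≠ 0) :
    ∃ c : F, c ≠ 0 ∧ (pt x y z h).rep 0 = c * x ∧ (pt x y z h).rep 1 = c * y ∧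
      (pt x y z h).rep 2 = c * z := by
  obtain ⟨a, ha⟩ := Projectivization.exists_smul_eq_mk_rep F ![x,y,z] h
  refine ⟨a, a.ne_zero, ?_, ?_, ?_⟩
  · simpa [Units.smul_def, pt] using (congrFun ha 0).symm
  · simpa [Units.smul_def, pt] using (congrFun ha 1).symm
  · simpa [Units.smul_def, pt] using (congrFun ha 2).symm

lemma exists_pt_eq (P : PG2 F) : ∃ (x y z : F) (h : ![x,y,z] ≠ 0), P = pt x y z h := by
  refine ⟨P.rep 0, P.rep 1, P.rep 2, by rw [eta3]; exact P.rep_nonzero, ?_⟩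
  conv_lhs => rw [← P.mk_rep]
  unfold pt
  exact (Projectivization.mk_eq_mk_iff' F _ _ _ _).2 ⟨1, by simp [eta3]⟩

lemma mem_Ck_pt {k x y z : F} (h : ![x,y,z] ≠ 0) :
    pt x y z h ∈ Ck k ↔ x * y + k * z ^ 2 = 0 := by
  obtain ⟨c, hc, h0, h1, h2⟩ := exists_rep_pt h
  simp only [Ck, Set.mem_setOf_eq, h0, h1, h2]
  constructor
  · intro hE
    have : c^2 * (x*y + k*z^2) = 0 := by linear_combination hE
    rcases mul_eq_zero.1 this with h | h
    · exact absurd h (pow_ne_zero _ hc)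
    · exact h
  · intro hE; linear_combination c^2 * hE

lemma inc_pt {u v w x y z : F} (hl : ![u,v,w] ≠ 0) (hp : ![x,y,z] ≠ 0) :
    inc (pt u v w hl) (pt x y z hp) ↔ u*x + v*y + w*z = 0 := by
  obtain ⟨c, hc, h0, h1, h2⟩ := exists_rep_pt hl
  obtain ⟨d, hd, g0, g1, g2⟩ := exists_rep_pt hp
  simp only [inc, h0, h1, h2, g0, g1, g2]
  constructor
  · intro hE
    have : (c*d) * (u*x + v*y + w*z) = 0 := by linear_combination hE
    rcases mul_eq_zero.1 this with h | h
    · exact absurd h (mul_ne_zero hc hd)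
    · exact h
  · intro hE; linear_combination (c*d) * hE

lemma vne3 (v : Fin 3 → F) (hv : v ≠ 0) : v 0 ≠ 0 ∨ v 1 ≠ 0 ∨ v 2 ≠ 0 := by
  by_contra h
  push_neg at h
  exact hv (by funext i; fin_cases i <;> simp [h.1, h.2.1, h.2.2])


lemma second_point_affine {u v k k' : F} (hk : k ≠ 0) (hk' : k' ≠ 0) (hkk' : k ≠ k')
    (h2 : (2:F) ≠ 0)
    (hsq : 1 + 4*k*u*v = 0 → ∃ s : F, s ≠ 0 ∧ s^2 = 1 + 4*k'*u*v)
    {P : PG2 F} (hP : P ∈ Ck k)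
    (hl : ![u, v, (1:F)] ≠ 0) (hinc : inc (pt u v 1 hl) P) :
    ∃ Q : PG2 F, (Q ∈ Ck k ∪ Ck k') ∧ inc (pt u v 1 hl) Q ∧ Q ≠ P := by
  obtain ⟨p0, p1, p2, hp, rfl⟩ := exists_pt_eq P
  rw [mem_Ck_pt] at hP
  rw [inc_pt] at hinc
  by_cases hu : u = 0
  · subst hu
    by_cases hv : v = 0
    · -- line z = 0
      subst hv
      have hp2 : p2 = 0 := by linear_combination hinc
      have hp01 : p0 * p1 = 0 := by linear_combination hP - k*p2*hp2
      rcases mul_eq_zero.1 hp01 with h0 | h1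
      · have hp1 : p1 ≠ 0 := by
          rcases vne3 _ hp with h | h | h
          · exact absurd h0 h
          · exact h
          · exact absurd hp2 h
        refine ⟨pt 1 0 0 (vec_ne_zero 0 one_ne_zero), Or.inl ?_, ?_, ?_⟩
        · rw [mem_Ck_pt]; ring
        · rw [inc_pt]; ring
        · intro hcon
          rw [pt_eq_pt_iff] at hcon
          obtain ⟨c, hc, e1, -, -⟩ := hcon
          rw [h0, mul_zero] at e1
          exact one_ne_zero e1
      · have hp0 : p0 ≠ 0 := by
          rcases vne3 _ hp with h | h | h
          · exact h
          · exact absurd h1 h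
          · exact absurd hp2 h
        refine ⟨pt 0 1 0 (vec_ne_zero 1 one_ne_zero), Or.inl ?_, ?_, ?_⟩
        · rw [mem_Ck_pt]; ring
        · rw [inc_pt]; ring
        · intro hcon
          rw [pt_eq_pt_iff] at hcon
          obtain ⟨c, hc, -, e2, -⟩ := hcon
          rw [h1, mul_zero] at e2
          exact one_ne_zero e2
    · -- line vy + z = 0
      by_cases hPE : pt p0 p1 p2 hp = pt 1 0 0 (vec_ne_zero 0 one_ne_zero)
      · refine ⟨pt (-(k*v^2)) 1 (-v) (vec_ne_zero 1 one_ne_zero), Or.inl ?_, ?_, ?_⟩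
        · rw [mem_Ck_pt]; ring
        · rw [inc_pt]; ring
        · intro hcon
          rw [hPE, pt_eq_pt_iff] at hcon
          obtain ⟨c, hc, -, e2, -⟩ := hcon
          rw [mul_zero] at e2
          exact one_ne_zero e2
      · refine ⟨pt 1 0 0 (vec_ne_zero 0 one_ne_zero), Or.inl ?_, ?_, ?_⟩
        · rw [mem_Ck_pt]; ring
        · rw [inc_pt]; ring
        · exact fun h => hPE h.symm
  · by_cases hv : v = 0
    · -- line ux + z = 0
      subst hv
      by_cases hPE : pt p0 p1 p2 hp = pt 0 1 0 (vec_ne_zero 1 one_ne_zero)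
      · refine ⟨pt 1 (-(k*u^2)) (-u) (vec_ne_zero 0 one_ne_zero), Or.inl ?_, ?_, ?_⟩
        · rw [mem_Ck_pt]; ring
        · rw [inc_pt]; ring
        · intro hcon
          rw [hPE, pt_eq_pt_iff] at hcon
          obtain ⟨c, hc, e1, -, -⟩ := hcon
          rw [mul_zero] at e1
          exact one_ne_zero e1
      · refine ⟨pt 0 1 0 (vec_ne_zero 1 one_ne_zero), Or.inl ?_, ?_, ?_⟩
        · rw [mem_Ck_pt]; ring
        · rw [inc_pt]; ring
        · exact fun h => hPE h.symm
    · -- u ≠ 0, v ≠ 0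
      have hp1 : p1 ≠ 0 := by
        intro h1
        have hkp2 : k * p2^2 = 0 := by linear_combination hP - p0*h1
        have h2' : p2 = 0 := sq_eq_zero_iff.1 ((mul_eq_zero.1 hkp2).resolve_left hk)
        have h0 : p0 = 0 := by
          have : u * p0 = 0 := by linear_combination hinc - v*h1 - h2'
          exact (mul_eq_zero.1 this).resolve_left hu
        rcases vne3 _ hp with h | h | h
        · exact h h0
        · exact h h1
        · exact h h2'
      set x := p0 / p1 with hxdef
      have hp0 : p0 = p1 * x := by rw [hxdef, mul_div_assoc', eq_div_iff hp1, mul_comm]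
      have hp2 : p2 = p1 * (-(u*x + v)) := by
        have hpe : p2 = -(u * p0 + v * p1) := by linear_combination hinc
        rw [hpe, hp0]; ring
      have hPeq : pt p0 p1 p2 hp = pt x 1 (-(u*x+v)) (vec_ne_zero 1 one_ne_zero) := by
        rw [pt_eq_pt_iff]
        exact ⟨p1, hp1, by rw [hp0], by ring, hp2⟩
      have hCx : x + k * (u*x + v)^2 = 0 := by
        have h := hP
        rw [hp0, hp2] at h
        have hh : p1^2 * (x + k*(u*x+v)^2) = 0 := by linear_combination h
        exact (mul_eq_zero.1 hh).resolve_left (pow_ne_zero _ hp1)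
      have hx0 : x ≠ 0 := by
        intro h0
        rw [h0] at hCx
        have hkv : k * v^2 = 0 := by linear_combination hCx
        rcases mul_eq_zero.1 hkv with h | h
        · exact hk h
        · exact hv (sq_eq_zero_iff.1 h)
      by_cases hvv : v^2 = u^2 * x^2
      · -- tangent case
        have huxv : u * x = v := by
          have hfac : (u*x - v) * (u*x + v) = 0 := by linear_combination -hvv
          rcases mul_eq_zero.1 hfac with h | h
          · linear_combination h
          · exfalso
            have hxz : x = 0 := by linear_combination hCx - k*(u*x+v)*h
            exact hx0 hxz
        have htan : 1 + 4*k*u*v = 0 := by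
          have hx4 : x + 4*k*v^2 = 0 := by linear_combination hCx - k*(u*x+3*v)*huxv
          have hv4 : v*(1 + 4*k*u*v) = 0 := by linear_combination u*hx4 - huxv
          exact (mul_eq_zero.1 hv4).resolve_left hv
        obtain ⟨s, hs0, hs⟩ := hsq htan
        have hY : 2*k'*u^2 ≠ 0 :=
          mul_ne_zero (mul_ne_zero h2 hk') (pow_ne_zero _ hu)
        refine ⟨pt (s - (1 + 2*k'*u*v)) (2*k'*u^2)
            (-(u*(s - (1 + 2*k'*u*v)) + v*(2*k'*u^2))) (vec_ne_zero 1 (by simpa using hY)),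
          Or.inr ?_, ?_, ?_⟩
        · rw [mem_Ck_pt]; linear_combination (k'*u^2) * hs
        · rw [inc_pt]; ring
        · intro hcon
          rw [hPeq, pt_eq_pt_iff] at hcon
          obtain ⟨c, hc, e1, e2, -⟩ := hcon
          rw [mul_one] at e2
          -- e2 : 2*k'*u^2 = c, e1 : s - (1+2k'uv) = c * x
          have hxk' : x + k' * (u*x + v)^2 = 0 := by
            rw [← e2] at e1
            -- e1 : s - (1+2k'uv) = (2k'u²) * x
            have hY2 : (2*k'*u^2)^2 * (x + k'*(u*x+v)^2) = 0 := by
              linear_combination (k'*u^2)*hs - (2*k'*u^2 + 2*k'*u*(u*(s - (1+2*k'*u*v)) + v*(2*k'*u^2)) + k'*u^2*((2*k'*u^2)*x - (s - (1+2*k'*u*v))))*e1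
            exact (mul_eq_zero.1 hY2).resolve_left (pow_ne_zero _ hY)
          have hdiff : (k - k') * (u*x+v)^2 = 0 := by linear_combination hCx - hxk'
          rcases mul_eq_zero.1 hdiff with h | h
          · exact (sub_ne_zero.2 hkk') h
          · have hz := sq_eq_zero_iff.1 h
            have hxz : x = 0 := by linear_combination hCx - k*(u*x+v)*hz
            exact hx0 hxz
      · -- second point on C_k
        have hY : u^2 * x ≠ 0 := mul_ne_zero (pow_ne_zero _ hu) hx0
        refine ⟨pt (v^2) (u^2*x) (-(u*v^2 + v*(u^2*x))) (vec_ne_zero 1 (by simpa using hY)),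
          Or.inl ?_, ?_, ?_⟩
        · rw [mem_Ck_pt]; linear_combination (u^2*v^2) * hCx
        · rw [inc_pt]; ring
        · intro hcon
          rw [hPeq, pt_eq_pt_iff] at hcon
          obtain ⟨c, hc, e1, e2, -⟩ := hcon
          rw [mul_one] at e2
          exact hvv (by linear_combination e1 - x*e2)

lemma second_point_vertical {u v bb : F}
    (hdico : ∀ a : F, a ≠ 0 → (∃ s : F, a = s^2) ∨ (∃ s : F, a = bb*s^2))
    {P : PG2 F} (hl : ![u, v, (0:F)] ≠ 0)
    (hP : P ∈ Ck 1 ∪ Ck bb ∪ {pt (0:F) 0 1 (vec_ne_zero 2 one_ne_zero)})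
    (hinc : inc (pt u v 0 hl) P) :
    ∃ Q : PG2 F, Q ∈ Ck 1 ∪ Ck bb ∪ {pt (0:F) 0 1 (vec_ne_zero 2 one_ne_zero)} ∧
      inc (pt u v 0 hl) Q ∧ Q ≠ P := by
  set N : PG2 F := pt (0:F) 0 1 (vec_ne_zero 2 one_ne_zero) with hN
  by_cases hPN : P = N
  · subst hPN
    by_cases hu : u = 0
    · refine ⟨pt 1 0 0 (vec_ne_zero 0 one_ne_zero), Or.inl (Or.inl ?_), ?_, ?_⟩
      · rw [mem_Ck_pt]; ring
      · rw [inc_pt, hu]; ring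
      · intro hcon
        rw [hN, pt_eq_pt_iff] at hcon
        obtain ⟨c, hc, e1, -, -⟩ := hcon
        rw [mul_zero] at e1
        exact one_ne_zero e1
    · by_cases hv : v = 0
      · refine ⟨pt 0 1 0 (vec_ne_zero 1 one_ne_zero), Or.inl (Or.inl ?_), ?_, ?_⟩
        · rw [mem_Ck_pt]; ring
        · rw [inc_pt, hv]; ring
        · intro hcon
          rw [hN, pt_eq_pt_iff] at hcon
          obtain ⟨c, hc, -, e2, -⟩ := hcon
          rw [mul_zero] at e2
          exact one_ne_zero e2
      · have huv : u * v ≠ 0 := mul_ne_zero hu hv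
        rcases hdico (u*v) huv with ⟨s, hs⟩ | ⟨s, hs⟩
        · refine ⟨pt v (-u) s (vec_ne_zero 0 hv), Or.inl (Or.inl ?_), ?_, ?_⟩
          · rw [mem_Ck_pt]; linear_combination -hs
          · rw [inc_pt]; ring
          · intro hcon
            rw [hN, pt_eq_pt_iff] at hcon
            obtain ⟨c, hc, e1, -, -⟩ := hcon
            rw [mul_zero] at e1
            exact hv e1
        · refine ⟨pt v (-u) s (vec_ne_zero 0 hv), Or.inl (Or.inr ?_), ?_, ?_⟩
          · rw [mem_Ck_pt]; linear_combination -hs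
          · rw [inc_pt]; ring
          · intro hcon
            rw [hN, pt_eq_pt_iff] at hcon
            obtain ⟨c, hc, e1, -, -⟩ := hcon
            rw [mul_zero] at e1
            exact hv e1
  · refine ⟨N, Or.inr rfl, ?_, fun h => hPN h.symm⟩
    rw [hN, inc_pt]; ring

lemma finite_PG2 [Finite F] : Finite (PG2 F) := Quotient.finite _

lemma Ck_eq_insert {k : F} (hk : k ≠ 0) :
    Ck k = insert (pt 1 0 0 (vec_ne_zero 0 one_ne_zero))
      (insert (pt 0 1 0 (vec_ne_zero 1 one_ne_zero))
        ((fun x : F => pt (x^2) (-k) x (vec_ne_zero 1 (by simpa using neg_ne_zero.mpr hk))) ''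
          {x : F | x ≠ 0})) := by
  ext P
  constructor
  · intro hPC
    obtain ⟨p0, p1, p2, hp, rfl⟩ := exists_pt_eq P
    rw [mem_Ck_pt] at hPC
    by_cases hp2 : p2 = 0
    · have hp01 : p0 * p1 = 0 := by linear_combination hPC - k*p2*hp2
      rcases mul_eq_zero.1 hp01 with h0 | h1
      · have hp1 : p1 ≠ 0 := by
          rcases vne3 _ hp with h | h | h
          · exact absurd h0 h
          · exact h
          · exact absurd hp2 h
        refine Set.mem_insert_iff.2 (Or.inr (Set.mem_insert_iff.2 (Or.inl ?_)))
        rw [pt_eq_pt_iff]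
        exact ⟨p1, hp1, by rw [h0]; ring, by ring, by rw [hp2]; ring⟩
      · have hp0 : p0 ≠ 0 := by
          rcases vne3 _ hp with h | h | h
          · exact h
          · exact absurd h1 h
          · exact absurd hp2 h
        refine Set.mem_insert_iff.2 (Or.inl ?_)
        rw [pt_eq_pt_iff]
        exact ⟨p0, hp0, by ring, by rw [h1]; ring, by rw [hp2]; ring⟩
    · have hp0 : p0 ≠ 0 := by
        intro h0
        have : k * p2^2 = 0 := by linear_combination hPC - p1*h0
        exact hp2 (sq_eq_zero_iff.1 ((mul_eq_zero.1 this).resolve_left hk))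
      refine Set.mem_insert_iff.2 (Or.inr (Set.mem_insert_iff.2 (Or.inr ?_)))
      refine ⟨p0 / p2, by simpa using div_ne_zero hp0 hp2, ?_⟩
      rw [eq_comm, pt_eq_pt_iff]
      refine ⟨p2^2 / p0, div_ne_zero (pow_ne_zero _ hp2) hp0, ?_, ?_, ?_⟩
      · field_simp
      · rw [div_mul_eq_mul_div, eq_div_iff hp0]
        linear_combination hPC
      · field_simp
  · intro hPm
    rcases Set.mem_insert_iff.1 hPm with h | h
    · rw [h, mem_Ck_pt]; ring
    rcases Set.mem_insert_iff.1 h with h' | h'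
    · rw [h', mem_Ck_pt]; ring
    · obtain ⟨x, -, rfl⟩ := h'
      rw [mem_Ck_pt]; ring

lemma ncard_Ck [Fintype F] {k : F} (hk : k ≠ 0) : (Ck k).ncard = Fintype.card F + 1 := by
  haveI : Finite (PG2 F) := finite_PG2
  rw [Ck_eq_insert hk]
  have hinj : Set.InjOn
      (fun x : F => pt (x^2) (-k) x (vec_ne_zero 1 (by simpa using neg_ne_zero.mpr hk)))
      {x : F | x ≠ 0} := by
    intro x hx y hy hxy
    simp only at hxy
    rw [pt_eq_pt_iff] at hxy
    obtain ⟨c, hc, e1, e2, e3⟩ := hxy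
    have hc1 : c = 1 := by
      have h : k * (c - 1) = 0 := by linear_combination e2
      have := (mul_eq_zero.1 h).resolve_left hk
      linear_combination this
    rw [hc1, one_mul] at e3
    exact e3
  have hE1 : pt (0:F) 1 0 (vec_ne_zero 1 one_ne_zero) ∉
      ((fun x : F => pt (x^2) (-k) x (vec_ne_zero 1 (by simpa using neg_ne_zero.mpr hk))) ''
        {x : F | x ≠ 0}) := by
    rintro ⟨x, hx, hxe⟩
    rw [eq_comm, pt_eq_pt_iff] at hxe
    obtain ⟨c, hc, -, -, e3⟩ := hxe
    exact hx ((mul_eq_zero.1 e3.symm).resolve_left hc)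
  have hE0 : pt (1:F) 0 0 (vec_ne_zero 0 one_ne_zero) ∉
      insert (pt (0:F) 1 0 (vec_ne_zero 1 one_ne_zero))
      ((fun x : F => pt (x^2) (-k) x (vec_ne_zero 1 (by simpa using neg_ne_zero.mpr hk))) ''
        {x : F | x ≠ 0}) := by
    intro hmem
    rcases Set.mem_insert_iff.1 hmem with h | ⟨x, hx, hxe⟩
    · rw [pt_eq_pt_iff] at h
      obtain ⟨c, hc, e1, -, -⟩ := h
      rw [mul_zero] at e1
      exact one_ne_zero e1
    · rw [eq_comm, pt_eq_pt_iff] at hxe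
      obtain ⟨c, hc, -, e2, -⟩ := hxe
      have : c = 0 := by
        rcases mul_eq_zero.1 (show c * (-k) = 0 by linear_combination -e2) with h | h
        · exact h
        · exact absurd (neg_eq_zero.1 h) hk
      exact hc this
  rw [Set.ncard_insert_of_notMem hE0, Set.ncard_insert_of_notMem hE1,
    Set.ncard_image_of_injOn hinj]
  have hcomp : {x : F | x ≠ 0} = Set.univ \ {0} := by ext t; simp
  rw [hcomp, Set.ncard_diff_singleton_of_mem (Set.mem_univ 0), Set.ncard_univ,
    Nat.card_eq_fintype_card]
  have := Fintype.card_pos (α := F)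
  omega

lemma Ck_inter {bb : F} (hbb : bb ≠ 1) :
    Ck (1:F) ∩ Ck bb =
      {pt (1:F) 0 0 (vec_ne_zero 0 one_ne_zero), pt (0:F) 1 0 (vec_ne_zero 1 one_ne_zero)} := by
  ext P
  constructor
  · rintro ⟨h1, h2⟩
    obtain ⟨p0, p1, p2, hp, rfl⟩ := exists_pt_eq P
    rw [mem_Ck_pt] at h1 h2
    have hp2 : p2 = 0 := by
      have h : (bb - 1) * p2^2 = 0 := by linear_combination h2 - h1
      exact sq_eq_zero_iff.1 ((mul_eq_zero.1 h).resolve_left (sub_ne_zero.2 hbb))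
    have hp01 : p0 * p1 = 0 := by linear_combination h1 - p2*hp2
    rcases mul_eq_zero.1 hp01 with h0 | h1'
    · have hp1 : p1 ≠ 0 := by
        rcases vne3 _ hp with h | h | h
        · exact absurd h0 h
        · exact h
        · exact absurd hp2 h
      right
      rw [Set.mem_singleton_iff, pt_eq_pt_iff]
      exact ⟨p1, hp1, by rw [h0]; ring, by ring, by rw [hp2]; ring⟩
    · have hp0 : p0 ≠ 0 := by
        rcases vne3 _ hp with h | h | h
        · exact h
        · exact absurd h1' h
        · exact absurd hp2 h
      left
      rw [pt_eq_pt_iff]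
      exact ⟨p0, hp0, by ring, by rw [h1']; ring, by rw [hp2]; ring⟩
  · intro h
    rcases h with h | h
    · rw [h]; exact ⟨by rw [mem_Ck_pt]; ring, by rw [mem_Ck_pt]; ring⟩
    · rw [Set.mem_singleton_iff] at h
      rw [h]; exact ⟨by rw [mem_Ck_pt]; ring, by rw [mem_Ck_pt]; ring⟩


/-- In `PG(2,q)` with `q ≡ 3 (mod 4)`, `q ≥ 7`, if `b` and `b − 1` are non-squares, then
`S = C_1 ∪ C_b ∪ {(0:0:1)}` is an untouchable set of size `2q + 1`. -/
theorem untouchable_two_q_plus_one_odd {F : Type} [Field F] [Fintype F] {q : ℕ}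
    (hq : Fintype.card F = q) (h3 : q % 4 = 3) (h7 : 7 ≤ q)
    (b : F) (hb : ¬ IsSquare b) (hb1 : ¬ IsSquare (b - 1)) :
    Untouchable (Ck 1 ∪ Ck b ∪ {pt (0 : F) 0 1 (vec_ne_zero 2 (by simp))}) ∧
      (Ck 1 ∪ Ck b ∪ {pt (0 : F) 0 1 (vec_ne_zero 2 (by simp))}).ncard = 2 * q + 1 := by
  letI := Classical.decEq F
  haveI : Finite (PG2 F) := finite_PG2
  have hchar : ringChar F ≠ 2 := by
    intro h
    have h' := FiniteField.even_card_iff_char_two.mp h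
    rw [hq] at h'; omega
  have h2 : (2:F) ≠ 0 := Ring.two_ne_zero hchar
  have hb0 : b ≠ 0 := fun h => hb (h ▸ ⟨0, by ring⟩)
  have hb1ne : b ≠ 1 := fun h => hb1 (by rw [h, sub_self]; exact ⟨0, by ring⟩)
  have hneg1 : ¬ IsSquare (-1 : F) := by
    rw [FiniteField.isSquare_neg_one_iff, hq]
    omega
  have hmul : ∀ a c : F, ¬ IsSquare a → ¬ IsSquare c → IsSquare (a * c) := by
    intro a c ha hc
    have ha0 : a ≠ 0 := fun h => ha (h ▸ ⟨0, by ring⟩)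
    have hc0 : c ≠ 0 := fun h => hc (h ▸ ⟨0, by ring⟩)
    have e1 : quadraticChar F a = -1 := quadraticChar_neg_one_iff_not_isSquare.2 ha
    have e2 : quadraticChar F c = -1 := quadraticChar_neg_one_iff_not_isSquare.2 hc
    have e3 : quadraticChar F (a*c) = 1 := by rw [map_mul, e1, e2]; ring
    exact (quadraticChar_one_iff_isSquare (mul_ne_zero ha0 hc0)).1 e3
  have hsq1b : IsSquare (1 - b) := by
    have h := hmul (-1) (b-1) hneg1 hb1
    rwa [show (-1:F)*(b-1) = 1 - b by ring] at h
  have hsqb1b : IsSquare ((b-1)*b) := hmul _ _ hb1 hb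
  have hdico : ∀ a : F, a ≠ 0 → (∃ s : F, a = s^2) ∨ (∃ s : F, a = b*s^2) := by
    intro a ha
    by_cases hsa : IsSquare a
    · obtain ⟨r, hr⟩ := hsa
      exact Or.inl ⟨r, by rw [hr]; ring⟩
    · obtain ⟨r, hr⟩ := hmul a b hsa hb
      refine Or.inr ⟨r/b, ?_⟩
      rw [div_pow, eq_comm, mul_comm, div_mul_eq_mul_div, div_eq_iff (pow_ne_zero 2 hb0)]
      linear_combination -b*hr
  -- the tangent-switch facts
  have hsqA : ∀ u v : F, 1 + 4*(1:F)*u*v = 0 → ∃ s : F, s ≠ 0 ∧ s^2 = 1 + 4*b*u*v := by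
    intro u v heq
    obtain ⟨r, hr⟩ := hsq1b
    have hr0 : r ≠ 0 := by
      intro h
      rw [h, mul_zero] at hr
      exact hb1ne (by linear_combination -hr)
    exact ⟨r, hr0, by linear_combination -hr - b*heq⟩
  have hsqB : ∀ u v : F, 1 + 4*b*u*v = 0 → ∃ s : F, s ≠ 0 ∧ s^2 = 1 + 4*(1:F)*u*v := by
    intro u v heq
    obtain ⟨r, hr⟩ := hsqb1b
    have hr0 : r ≠ 0 := by
      intro h
      rw [h, mul_zero] at hr
      rcases mul_eq_zero.1 hr with h' | h'
      · exact hb1ne (by linear_combination h')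
      · exact hb0 h'
    refine ⟨r/b, div_ne_zero hr0 hb0, ?_⟩
    rw [div_pow, div_eq_iff (pow_ne_zero 2 hb0)]
    linear_combination -hr - b*heq
  set N : PG2 F := pt (0:F) 0 1 (vec_ne_zero 2 (by simp)) with hN
  set S : Set (PG2 F) := Ck 1 ∪ Ck b ∪ {N} with hS
  constructor
  · -- untouchability
    intro l hcard
    obtain ⟨P, hPs⟩ := Set.ncard_eq_one.mp hcard
    have hPm : P ∈ {X ∈ S | inc l X} := by
      rw [hPs]; exact rfl
    obtain ⟨hPS, hPinc⟩ := Set.mem_sep_iff.1 hPm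
    obtain ⟨u, v, w, hl, rfl⟩ := exists_pt_eq l
    have hQex : ∃ Q : PG2 F, Q ∈ S ∧ inc (pt u v w hl) Q ∧ Q ≠ P := by
      by_cases hw : w = 0
      · subst hw
        exact second_point_vertical hdico hl hPS hPinc
      · have hl' : ![u/w, v/w, (1:F)] ≠ 0 := vec_ne_zero 2 one_ne_zero
        have hline : pt u v w hl = pt (u/w) (v/w) 1 hl' := by
          rw [pt_eq_pt_iff]
          exact ⟨w, hw, by field_simp, by field_simp, by ring⟩
        rw [hline] at hPinc
        have hPN : P ≠ N := by
          intro h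
          rw [h, hN, inc_pt] at hPinc
          simp at hPinc
        have hPC : P ∈ Ck 1 ∪ Ck b := by
          rcases hPS with h | h
          · exact h
          · exact absurd h hPN
        rcases hPC with h1 | hbm
        · obtain ⟨Q, hQm, hQinc, hQne⟩ :=
            second_point_affine (k := (1:F)) (k' := b) one_ne_zero hb0
              (fun h => hb1ne h.symm) h2 (hsqA (u/w) (v/w)) h1 hl' hPinc
          refine ⟨Q, Or.inl ?_, by rw [hline]; exact hQinc, hQne⟩
          rcases hQm with h | h
          · exact Or.inl h
          · exact Or.inr h
        · obtain ⟨Q, hQm, hQinc, hQne⟩ :=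
            second_point_affine (k := b) (k' := (1:F)) hb0 one_ne_zero
              hb1ne h2 (hsqB (u/w) (v/w)) hbm hl' hPinc
          refine ⟨Q, Or.inl ?_, by rw [hline]; exact hQinc, hQne⟩
          rcases hQm with h | h
          · exact Or.inr h
          · exact Or.inl h
    obtain ⟨Q, hQS, hQinc, hQne⟩ := hQex
    have hQm : Q ∈ {X ∈ S | inc (pt u v w hl) X} := Set.mem_sep_iff.2 ⟨hQS, hQinc⟩
    rw [hPs] at hQm
    exact hQne hQm
  · -- cardinality
    have hE0E1 : pt (1:F) 0 0 (vec_ne_zero 0 one_ne_zero) ≠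
        pt (0:F) 1 0 (vec_ne_zero 1 one_ne_zero) := by
      intro h
      rw [pt_eq_pt_iff] at h
      obtain ⟨c, hc, e1, -, -⟩ := h
      rw [mul_zero] at e1
      exact one_ne_zero e1
    have hu := Set.ncard_union_add_ncard_inter (Ck (1:F)) (Ck b)
    rw [Ck_inter hb1ne, Set.ncard_pair hE0E1, ncard_Ck one_ne_zero, ncard_Ck hb0, hq] at hu
    have hNmem : N ∉ Ck 1 ∪ Ck b := by
      rintro (h | h) <;> rw [hN, mem_Ck_pt] at h
      · simp at h
      · simp at h
        exact hb0 h
    rw [hS, Set.union_singleton, Set.ncard_insert_of_notMem hNmem]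
    omega
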